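/- For every integer k ≥ 0 and every real r > 1, the integral ∫₀^π (sin θ)^k / (1 + r² − 2r cos θ)^{k/2} dθ equals (ω_{k+2}/ω_{k+1}) · r^{−k}, where ω_m is the surface area of the unit sphere in ℝ^m. -/

import Mathlib

open Real MeasureTheory intervalIntegral

/-- Surface area of the unit sphere in ℝ^m: ω_m = 2 π^{m/2} / Γ(m/2). -/
noncomputable def sphereArea (m : ℕ) : ℝ :=
  2 * Real.pi ^ ((m : ℝ) / 2) / Real.Gamma ((m : ℝ) / 2)


private lemma d_pos {t c : ℝ} (ht : 1 < t) (hc : c ≤ 1) : 0 < 1 + t^2 - 2*t*c := by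
  nlinarith

private lemma pow_to_rpow {s : ℝ} (hs : 0 ≤ s) (n : ℕ) :
    (s^2) ^ ((n:ℝ)/2) = s ^ n := by
  rw [show (s:ℝ)^2 = s ^ ((2:ℕ):ℝ) by rw [Real.rpow_natCast],
    ← Real.rpow_mul hs]
  rw [show ((2:ℕ):ℝ) * ((n:ℝ)/2) = (n:ℝ) by push_cast; ring, Real.rpow_natCast]

private lemma wallis (k : ℕ) :
    ∫ θ in (0:ℝ)..π, Real.sin θ ^ k
      = Real.sqrt π * Real.Gamma (((k:ℝ)+1)/2) / Real.Gamma (((k:ℝ)+2)/2) := by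
  induction k using Nat.strong_induction_on with
  | _ k ih =>
    match k with
    | 0 =>
        simp only [pow_zero, Nat.cast_zero]
        rw [intervalIntegral.integral_const]
        norm_num
        rw [Real.Gamma_one_half_eq]
        exact (Real.mul_self_sqrt Real.pi_pos.le).symm
    | 1 =>
        simp only [pow_one, integral_sin, Real.cos_zero, Real.cos_pi, Nat.cast_one]
        rw [show ((1:ℝ)+2)/2 = 1/2 + 1 by norm_num,
          Real.Gamma_add_one (by norm_num), Real.Gamma_one_half_eq,
          show ((1:ℝ)+1)/2 = 1 by norm_num, Real.Gamma_one]
        have h : Real.sqrt π ≠ 0 := ne_of_gt (Real.sqrt_pos.mpr Real.pi_pos)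
        field_simp
        ring
    | (m+2) =>
        have hrec := integral_sin_pow m (a := 0) (b := π)
        rw [Real.sin_zero, Real.sin_pi] at hrec
        simp only [zero_pow (Nat.succ_ne_zero m), zero_mul, mul_zero, sub_zero, zero_sub,
          zero_div, neg_zero, zero_add] at hrec
        rw [hrec, ih m (by omega)]
        have h1 : ((m:ℝ)+1)/2 ≠ 0 := by positivity
        have h2 : ((m:ℝ)+2)/2 ≠ 0 := by positivity
        have e1 : ((m:ℝ)+2+1)/2 = ((m:ℝ)+1)/2 + 1 := by ring
        have e2 : ((m:ℝ)+2+2)/2 = ((m:ℝ)+2)/2 + 1 := by ring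
        have hΓ2 : Real.Gamma (((m:ℝ)+2)/2) ≠ 0 :=
          ne_of_gt (Real.Gamma_pos_of_pos (by positivity))
        have hΓ1 : Real.Gamma (((m:ℝ)+1)/2) ≠ 0 :=
          ne_of_gt (Real.Gamma_pos_of_pos (by positivity))
        push_cast
        rw [e1, e2, Real.Gamma_add_one h1, Real.Gamma_add_one h2]
        field_simp



private lemma sub_cos (n : ℕ) (g : ℝ → ℝ) (hg : ContinuousOn g (Set.Icc (-1:ℝ) 1)) :
    ∫ θ in (0:ℝ)..π, Real.sin θ ^ (n+1) * g (Real.cos θ)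
      = ∫ c in (-1:ℝ)..1, (1 - c^2) ^ ((n:ℝ)/2) * g c := by
  set G : ℝ → ℝ := fun c => (1 - c^2) ^ ((n:ℝ)/2) * g c with hGdef
  have hmaps : Real.cos '' Set.uIcc (0:ℝ) π ⊆ Set.Icc (-1:ℝ) 1 := by
    rintro x ⟨θ, _, rfl⟩
    exact ⟨Real.neg_one_le_cos θ, Real.cos_le_one θ⟩
  have hGc : ContinuousOn G (Real.cos '' Set.uIcc (0:ℝ) π) := by
    apply ContinuousOn.mono _ hmaps
    exact (((continuous_const.sub (continuous_pow 2)).rpow_const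
      (fun c => Or.inr (by positivity))).continuousOn).mul hg
  have h1 : ∀ x ∈ Set.uIcc (0:ℝ) π, HasDerivAt Real.cos (-Real.sin x) x :=
    fun x _ => Real.hasDerivAt_cos x
  have h2 : ContinuousOn (fun x => -Real.sin x) (Set.uIcc (0:ℝ) π) :=
    (Real.continuous_sin.neg).continuousOn
  have hsub := intervalIntegral.integral_comp_smul_deriv' h1 h2 hGc
  simp only [Function.comp] at hsub
  have key : Set.EqOn (fun θ => Real.sin θ ^ (n+1) * g (Real.cos θ))
      (fun θ => -((-Real.sin θ) • G (Real.cos θ))) (Set.uIcc (0:ℝ) π) := by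
    intro θ hθ
    rw [Set.uIcc_of_le Real.pi_pos.le] at hθ
    have hs : 0 ≤ Real.sin θ := Real.sin_nonneg_of_nonneg_of_le_pi hθ.1 hθ.2
    simp only [smul_eq_mul, hGdef]
    have hc : 1 - Real.cos θ^2 = Real.sin θ^2 := by
      nlinarith [Real.sin_sq_add_cos_sq θ]
    rw [hc, pow_to_rpow hs n]
    ring
  calc ∫ θ in (0:ℝ)..π, Real.sin θ ^ (n+1) * g (Real.cos θ)
      = ∫ θ in (0:ℝ)..π, -((-Real.sin θ) • G (Real.cos θ)) :=
        intervalIntegral.integral_congr key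
    _ = -∫ θ in (0:ℝ)..π, (-Real.sin θ) • G (Real.cos θ) := intervalIntegral.integral_neg
    _ = -∫ c in (Real.cos 0)..(Real.cos π), G c := by rw [hsub]
    _ = ∫ c in (-1:ℝ)..1, G c := by
        rw [Real.cos_zero, Real.cos_pi, intervalIntegral.integral_symm]; ring



private lemma rpow_juggle (n : ℕ) {A D s : ℝ} (hA : 0 < A) (hD : 0 < D) (hs : 0 ≤ s) :
    (-(A^2) / D^2) * ((A^2 * s / D^2) ^ ((n:ℝ)/2) * (A^2 / D) ^ (-((n:ℝ)+1)/2))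
      = -(A * (s ^ ((n:ℝ)/2) * D ^ (-((n:ℝ)+3)/2))) := by
  have h1 : (A^2 * s / D^2 : ℝ) = s * (A^2/D^2) := by ring
  rw [h1, Real.mul_rpow hs (by positivity)]
  have key : (A^2/D^2) * ((A^2/D^2) ^ ((n:ℝ)/2) * (A^2 / D) ^ (-((n:ℝ)+1)/2))
      = A * D ^ (-((n:ℝ)+3)/2) := by
    have l1 : (0:ℝ) < A^2/D^2 := by positivity
    have l2 : (0:ℝ) < A^2/D := by positivity
    have l3 : (0:ℝ) < (A^2/D^2) ^ ((n:ℝ)/2) := Real.rpow_pos_of_pos l1 _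
    have l4 : (0:ℝ) < (A^2/D) ^ (-((n:ℝ)+1)/2) := Real.rpow_pos_of_pos l2 _
    have l5 : (0:ℝ) < D ^ (-((n:ℝ)+3)/2) := Real.rpow_pos_of_pos hD _
    apply Real.log_injOn_pos (Set.mem_Ioi.mpr (by positivity))
      (Set.mem_Ioi.mpr (by positivity))
    rw [Real.log_mul (ne_of_gt l1) (by positivity), Real.log_mul (ne_of_gt l3) (ne_of_gt l4),
      Real.log_rpow l1, Real.log_rpow l2, Real.log_mul (ne_of_gt hA) (ne_of_gt l5),
      Real.log_rpow hD, Real.log_div (by positivity) (by positivity),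
      Real.log_div (by positivity) (by positivity), Real.log_pow, Real.log_pow]
    push_cast
    ring
  linear_combination (-(s ^ ((n:ℝ)/2))) * key

private lemma inversion (n : ℕ) {r : ℝ} (hr : 1 < r) :
    ∫ c in (-1:ℝ)..1, (1-c^2)^((n:ℝ)/2) * (1+r^2-2*r*c) ^ (-((n:ℝ)+1)/2)
      = (r^2-1) * ∫ c in (-1:ℝ)..1, (1-c^2)^((n:ℝ)/2) * (1+r^2-2*r*c) ^ (-((n:ℝ)+3)/2) := by
  have hr0 : (0:ℝ) < r := lt_trans one_pos hr
  have hA : (0:ℝ) < r^2 - 1 := by nlinarith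
  set σ : ℝ → ℝ := fun v => (1+r^2)/(2*r) - (r^2-1)^2/(2*r) * (1+r^2-2*r*v)⁻¹ with hσdef
  set σ' : ℝ → ℝ := fun v => -((r^2-1)^2) / (1+r^2-2*r*v)^2 with hσ'def
  set G : ℝ → ℝ := fun c => (1-c^2)^((n:ℝ)/2) * (1+r^2-2*r*c) ^ (-((n:ℝ)+1)/2) with hGdef
  have huIcc : Set.uIcc (-1:ℝ) 1 = Set.Icc (-1:ℝ) 1 := Set.uIcc_of_le (by norm_num)
  have hwpos : ∀ v ∈ Set.Icc (-1:ℝ) 1, 0 < 1+r^2-2*r*v := fun v hv => d_pos hr hv.2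
  have hderiv : ∀ v ∈ Set.uIcc (-1:ℝ) 1, HasDerivAt σ (σ' v) v := by
    intro v hv
    rw [huIcc] at hv
    have hw := hwpos v hv
    have h0 : HasDerivAt (fun v : ℝ => 1+r^2-2*r*v) (-(2*r)) v := by
      simpa using ((hasDerivAt_id v).const_mul (2*r)).const_sub (1+r^2)
    have h1 := (h0.inv (ne_of_gt hw)).const_mul ((r^2-1)^2/(2*r))
    have h2 := h1.const_sub ((1+r^2)/(2*r))
    have heq : -((r^2-1)^2/(2*r) * (-(-(2*r)) / (1+r^2-2*r*v)^2)) = σ' v := by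
      rw [hσ'def]; field_simp
    exact heq ▸ h2
  have hσmem : ∀ v ∈ Set.Icc (-1:ℝ) 1, σ v ∈ Set.Icc (-1:ℝ) 1 := by
    intro v hv
    have hw := hwpos v hv
    have hw' : 1 + r^2 - r*2*v ≠ 0 := by linarith
    have e1 : 1 - σ v = (r-1)^2 * (1+v) / (1+r^2-2*r*v) := by
      rw [hσdef]; field_simp; ring
    have e2 : 1 + σ v = (r+1)^2 * (1-v) / (1+r^2-2*r*v) := by
      rw [hσdef]; field_simp; ring
    have p1 : 0 ≤ (r-1)^2 * (1+v) / (1+r^2-2*r*v) :=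
      div_nonneg (mul_nonneg (sq_nonneg _) (by linarith [hv.1])) hw.le
    have p2 : 0 ≤ (r+1)^2 * (1-v) / (1+r^2-2*r*v) :=
      div_nonneg (mul_nonneg (sq_nonneg _) (by linarith [hv.2])) hw.le
    constructor <;> [linarith [e2 ▸ p2]; linarith [e1 ▸ p1]]
  have himg : σ '' Set.uIcc (-1:ℝ) 1 ⊆ Set.Icc (-1:ℝ) 1 := by
    rintro x ⟨v, hv, rfl⟩; exact hσmem v (huIcc ▸ hv)
  have hwcont : Continuous (fun c : ℝ => 1+r^2-2*r*c) := by fun_prop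
  have hGc : ContinuousOn G (σ '' Set.uIcc (-1:ℝ) 1) := by
    apply ContinuousOn.mono _ himg
    apply ContinuousOn.mul
    · exact ((continuous_const.sub (continuous_pow 2)).rpow_const
        (fun c => Or.inr (by positivity))).continuousOn
    · exact ContinuousOn.rpow_const hwcont.continuousOn
        (fun c hc => Or.inl (ne_of_gt (hwpos c hc)))
  have hσ'c : ContinuousOn σ' (Set.uIcc (-1:ℝ) 1) := by
    apply ContinuousOn.div continuous_const.continuousOn (hwcont.pow 2).continuousOn
    intro v hv
    rw [huIcc] at hv
    exact pow_ne_zero 2 (ne_of_gt (hwpos v hv))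
  have main := intervalIntegral.integral_comp_smul_deriv' hderiv hσ'c hGc
  simp only [Function.comp] at main
  have hneg1 : σ (-1) = 1 := by
    rw [hσdef]
    have h : (1+r^2-2*r*(-1) : ℝ) = (1+r)^2 := by ring
    simp only
    rw [h]
    have h2 : ((1+r)^2 : ℝ) ≠ 0 := by positivity
    field_simp
    ring
  have hpos1 : σ 1 = -1 := by
    rw [hσdef]
    have h : (1+r^2-2*r*1 : ℝ) = (r-1)^2 := by ring
    simp only
    rw [h]
    have h2 : ((r-1)^2 : ℝ) ≠ 0 := pow_ne_zero 2 (sub_ne_zero.mpr (ne_of_gt hr))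
    field_simp [sub_ne_zero.mpr hr.ne']
    ring
  have hptw : Set.EqOn (fun v => σ' v • G (σ v))
      (fun v => -((r^2-1) * ((1-v^2)^((n:ℝ)/2) * (1+r^2-2*r*v) ^ (-((n:ℝ)+3)/2))))
      (Set.uIcc (-1:ℝ) 1) := by
    intro v hv
    rw [huIcc] at hv
    have hw := hwpos v hv
    have hw' : 1 + r^2 - r*2*v ≠ 0 := by linarith
    have key1 : 1 - (σ v)^2 = (r^2-1)^2 * (1-v^2) / (1+r^2-2*r*v)^2 := by
      rw [hσdef]; field_simp; ring
    have key2 : 1 + r^2 - 2*r*(σ v) = (r^2-1)^2 / (1+r^2-2*r*v) := by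
      rw [hσdef]; field_simp; ring
    simp only [smul_eq_mul, hGdef, hσ'def]
    rw [key1, key2]
    have hs : (0:ℝ) ≤ 1 - v^2 := by nlinarith [hv.1, hv.2]
    exact rpow_juggle n hA hw hs
  calc ∫ c in (-1:ℝ)..1, (1-c^2)^((n:ℝ)/2) * (1+r^2-2*r*c) ^ (-((n:ℝ)+1)/2)
      = -∫ x in (σ (-1))..(σ 1), G x := by
        rw [hneg1, hpos1, intervalIntegral.integral_symm]
    _ = -∫ v in (-1:ℝ)..1, σ' v • G (σ v) := by rw [main]
    _ = -∫ v in (-1:ℝ)..1,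
          -((r^2-1) * ((1-v^2)^((n:ℝ)/2) * (1+r^2-2*r*v) ^ (-((n:ℝ)+3)/2))) := by
        rw [intervalIntegral.integral_congr hptw]
    _ = (r^2-1) * ∫ c in (-1:ℝ)..1, (1-c^2)^((n:ℝ)/2) * (1+r^2-2*r*c) ^ (-((n:ℝ)+3)/2) := by
        rw [intervalIntegral.integral_neg, intervalIntegral.integral_const_mul]; ring



private lemma cont_integrand (n : ℕ) {t : ℝ} (ht : 1 < t) (p : ℝ) :
    ContinuousOn (fun c : ℝ => (1-c^2)^((n:ℝ)/2) * (1+t^2-2*t*c) ^ p)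
      (Set.Icc (-1:ℝ) 1) := by
  apply ContinuousOn.mul
  · exact ((continuous_const.sub (continuous_pow 2)).rpow_const
      (fun c => Or.inr (by positivity))).continuousOn
  · exact ContinuousOn.rpow_const (by fun_prop)
      (fun c hc => Or.inl (ne_of_gt (d_pos ht hc.2)))

private lemma integrable_integrand (n : ℕ) {t : ℝ} (ht : 1 < t) (p : ℝ) :
    IntervalIntegrable (fun c : ℝ => (1-c^2)^((n:ℝ)/2) * (1+t^2-2*t*c) ^ p)
      volume (-1:ℝ) 1 := by
  apply ContinuousOn.intervalIntegrable
  rw [Set.uIcc_of_le (by norm_num : (-1:ℝ) ≤ 1)]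
  exact cont_integrand n ht p

private lemma J_zero (n : ℕ) {t : ℝ} (ht : 1 < t) :
    ∫ c in (-1:ℝ)..1, (1-c^2)^((n:ℝ)/2) *
        ((1 - t*c) * (1+t^2-2*t*c) ^ (-((n:ℝ)+3)/2)) = 0 := by
  have hptw : Set.EqOn
      (fun c : ℝ => (1-c^2)^((n:ℝ)/2) * ((1 - t*c) * (1+t^2-2*t*c) ^ (-((n:ℝ)+3)/2)))
      (fun c : ℝ => (1/2) * ((1-c^2)^((n:ℝ)/2) * (1+t^2-2*t*c) ^ (-((n:ℝ)+1)/2))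
        + ((1-t^2)/2) * ((1-c^2)^((n:ℝ)/2) * (1+t^2-2*t*c) ^ (-((n:ℝ)+3)/2)))
      (Set.uIcc (-1:ℝ) 1) := by
    intro c hc
    rw [Set.uIcc_of_le (by norm_num : (-1:ℝ) ≤ 1)] at hc
    have hw : 0 < 1+t^2-2*t*c := d_pos ht hc.2
    have hsplit : (1+t^2-2*t*c) ^ (-((n:ℝ)+1)/2)
        = (1+t^2-2*t*c) ^ (-((n:ℝ)+3)/2) * (1+t^2-2*t*c) := by
      rw [show (-((n:ℝ)+1)/2) = (-((n:ℝ)+3)/2) + 1 by ring, Real.rpow_add_one hw.ne']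
    simp only
    rw [hsplit]
    ring
  rw [intervalIntegral.integral_congr hptw,
    intervalIntegral.integral_add
      (((integrable_integrand n ht _).const_mul _))
      (((integrable_integrand n ht _).const_mul _)),
    intervalIntegral.integral_const_mul, intervalIntegral.integral_const_mul,
    inversion n ht]
  ring

private lemma deriv_ptw (n : ℕ) {x c : ℝ} (hx : 1 < x) (hc : c ≤ 1) :
    HasDerivAt (fun y : ℝ => (1-c^2)^((n:ℝ)/2) * (y^(n+1) * (1+y^2-2*y*c) ^ (-((n:ℝ)+1)/2)))
      ((1-c^2)^((n:ℝ)/2) * (((n:ℝ)+1) * x^n * ((1 - x*c) * (1+x^2-2*x*c) ^ (-((n:ℝ)+3)/2))))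
      x := by
  have hw : 0 < 1+x^2-2*x*c := d_pos hx hc
  have h0' := (((hasDerivAt_pow 2 x).const_add 1).sub
    (((hasDerivAt_id x).const_mul 2).mul_const c))
  have h0 : HasDerivAt (fun y : ℝ => 1+y^2-2*y*c) (2*x-2*c) x := by
    exact h0'.congr_deriv (by push_cast; ring)
  have hcomp := (Real.hasDerivAt_rpow_const (x := 1+x^2-2*x*c)
    (p := -((n:ℝ)+1)/2) (Or.inl hw.ne')).comp x h0
  have hmul := (hasDerivAt_pow (n+1) x).mul hcomp
  have hfinal := hmul.const_mul ((1-c^2)^((n:ℝ)/2))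
  refine hfinal.congr_deriv ?_
  have hsplit : (1+x^2-2*x*c) ^ (-((n:ℝ)+1)/2)
      = (1+x^2-2*x*c) ^ (-((n:ℝ)+1)/2 - 1) * (1+x^2-2*x*c) := by
    rw [show (-((n:ℝ)+1)/2) = (-((n:ℝ)+1)/2 - 1) + 1 by ring, Real.rpow_add_one hw.ne']
    ring_nf
  simp only [Function.comp, Nat.add_sub_cancel]
  rw [show (-((n:ℝ)+3)/2) = -((n:ℝ)+1)/2 - 1 by ring, hsplit, pow_succ x n]
  push_cast
  ring

private lemma F_hasDeriv (n : ℕ) {t : ℝ} (ht : 1 < t) :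
    HasDerivAt (fun x : ℝ => ∫ c in (-1:ℝ)..1,
        (1-c^2)^((n:ℝ)/2) * (x^(n+1) * (1+x^2-2*x*c) ^ (-((n:ℝ)+1)/2))) 0 t := by
  set ε : ℝ := (t-1)/2 with hε
  have hε0 : 0 < ε := by rw [hε]; linarith
  have hball : ∀ x ∈ Metric.ball t ε, 1 + ε < x ∧ x < t + ε := by
    intro x hx
    rw [Metric.mem_ball, Real.dist_eq, abs_lt] at hx
    constructor
    · rw [hε]; rw [hε] at hx; linarith [hx.1]
    · linarith [hx.2]
  have hΙ : Set.uIoc (-1:ℝ) 1 = Set.Ioc (-1:ℝ) 1 := Set.uIoc_of_le (by norm_num)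
  have hqneg : -((n:ℝ)+3)/2 ≤ 0 := by
    have : (0:ℝ) ≤ (n:ℝ)+3 := by positivity
    linarith
  have he1cont : Continuous (fun c : ℝ => (1-c^2)^((n:ℝ)/2)) :=
    (continuous_const.sub (continuous_pow 2)).rpow_const (fun c => Or.inr (by positivity))
  have hF_meas : ∀ᶠ x in nhds t, AEStronglyMeasurable
      (fun c : ℝ => (1-c^2)^((n:ℝ)/2) * (x^(n+1) * (1+x^2-2*x*c) ^ (-((n:ℝ)+1)/2)))
      (volume.restrict (Set.uIoc (-1:ℝ) 1)) := by
    filter_upwards [Metric.ball_mem_nhds t hε0] with x hx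
    have hx1 : 1 < x := by have := (hball x hx).1; linarith
    apply ContinuousOn.aestronglyMeasurable _ measurableSet_uIoc
    rw [hΙ]
    apply ContinuousOn.mono _ Set.Ioc_subset_Icc_self
    exact he1cont.continuousOn.mul (continuousOn_const.mul
      (ContinuousOn.rpow_const (by fun_prop)
        (fun c hc => Or.inl (ne_of_gt (d_pos hx1 hc.2)))))
  have hF_int : IntervalIntegrable
      (fun c : ℝ => (1-c^2)^((n:ℝ)/2) * (t^(n+1) * (1+t^2-2*t*c) ^ (-((n:ℝ)+1)/2)))
      volume (-1:ℝ) 1 := by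
    apply ContinuousOn.intervalIntegrable
    rw [Set.uIcc_of_le (by norm_num : (-1:ℝ) ≤ 1)]
    exact he1cont.continuousOn.mul (continuousOn_const.mul
      (ContinuousOn.rpow_const (by fun_prop)
        (fun c hc => Or.inl (ne_of_gt (d_pos ht hc.2)))))
  have hF'_meas : AEStronglyMeasurable
      (fun c : ℝ => (1-c^2)^((n:ℝ)/2) *
        (((n:ℝ)+1) * t^n * ((1 - t*c) * (1+t^2-2*t*c) ^ (-((n:ℝ)+3)/2))))
      (volume.restrict (Set.uIoc (-1:ℝ) 1)) := by
    apply ContinuousOn.aestronglyMeasurable _ measurableSet_uIoc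
    rw [hΙ]
    apply ContinuousOn.mono _ Set.Ioc_subset_Icc_self
    exact he1cont.continuousOn.mul (continuousOn_const.mul
      (((by fun_prop : Continuous (fun c : ℝ => 1 - t*c)).continuousOn).mul
        (ContinuousOn.rpow_const (by fun_prop)
          (fun c hc => Or.inl (ne_of_gt (d_pos ht hc.2))))))
  have h_bound : ∀ᵐ c ∂(volume : Measure ℝ), c ∈ Set.uIoc (-1:ℝ) 1 →
      ∀ x ∈ Metric.ball t ε,
        ‖(1-c^2)^((n:ℝ)/2) *
          (((n:ℝ)+1) * x^n * ((1 - x*c) * (1+x^2-2*x*c) ^ (-((n:ℝ)+3)/2)))‖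
        ≤ ((n:ℝ)+1) * (t+ε)^n * ((1+(t+ε)) * (ε^2) ^ (-((n:ℝ)+3)/2)) := by
    apply Filter.Eventually.of_forall
    intro c hc x hx
    rw [hΙ] at hc
    obtain ⟨hx1', hx2⟩ := hball x hx
    have hx1 : 1 < x := by linarith
    have hw : 0 < 1+x^2-2*x*c := d_pos hx1 hc.2
    have hwball : ε^2 ≤ 1+x^2-2*x*c := by nlinarith [hc.2, hx1']
    have hWle : (1+x^2-2*x*c) ^ (-((n:ℝ)+3)/2) ≤ (ε^2) ^ (-((n:ℝ)+3)/2) :=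
      Real.rpow_le_rpow_of_nonpos (by positivity) hwball hqneg
    have hW0 : 0 ≤ (1+x^2-2*x*c) ^ (-((n:ℝ)+3)/2) := Real.rpow_nonneg hw.le _
    have hcsq : (0:ℝ) ≤ 1-c^2 := by nlinarith [hc.1.le, hc.2]
    have he1 : 0 ≤ (1-c^2)^((n:ℝ)/2) := Real.rpow_nonneg hcsq _
    have he1' : (1-c^2)^((n:ℝ)/2) ≤ 1 :=
      Real.rpow_le_one hcsq (by nlinarith [hc.1.le, hc.2]) (by positivity)
    have hl : |1 - x*c| ≤ 1 + (t+ε) := by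
      rw [abs_le]
      constructor <;> nlinarith [hc.1.le, hc.2, hx1, hx2]
    have hxn : x^n ≤ (t+ε)^n := pow_le_pow_left₀ (by linarith) (by linarith) n
    have hmid : |1 - x*c| * ((1+x^2-2*x*c) ^ (-((n:ℝ)+3)/2))
        ≤ (1+(t+ε)) * (ε^2) ^ (-((n:ℝ)+3)/2) :=
      mul_le_mul hl hWle hW0 (by positivity)
    have hstep : ((n:ℝ)+1) * x^n * (|1 - x*c| * ((1+x^2-2*x*c) ^ (-((n:ℝ)+3)/2)))
        ≤ ((n:ℝ)+1) * (t+ε)^n * ((1+(t+ε)) * (ε^2) ^ (-((n:ℝ)+3)/2)) := by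
      apply mul_le_mul _ hmid (by positivity) (by positivity)
      exact mul_le_mul_of_nonneg_left hxn (by positivity)
    rw [Real.norm_eq_abs]
    simp only [abs_mul]
    rw [abs_of_nonneg he1, abs_of_nonneg (by positivity : (0:ℝ) ≤ (n:ℝ)+1),
      abs_of_nonneg (by positivity : (0:ℝ) ≤ x^n), abs_of_nonneg hW0]
    calc (1-c^2)^((n:ℝ)/2) * (((n:ℝ)+1) * x^n * (|1 - x*c| *
            ((1+x^2-2*x*c) ^ (-((n:ℝ)+3)/2))))
        ≤ 1 * (((n:ℝ)+1) * (t+ε)^n * ((1+(t+ε)) * (ε^2) ^ (-((n:ℝ)+3)/2))) :=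
          mul_le_mul he1' hstep (by positivity) zero_le_one
      _ = ((n:ℝ)+1) * (t+ε)^n * ((1+(t+ε)) * (ε^2) ^ (-((n:ℝ)+3)/2)) := one_mul _
  have h_diff : ∀ᵐ c ∂(volume : Measure ℝ), c ∈ Set.uIoc (-1:ℝ) 1 →
      ∀ x ∈ Metric.ball t ε,
        HasDerivAt (fun y : ℝ =>
          (1-c^2)^((n:ℝ)/2) * (y^(n+1) * (1+y^2-2*y*c) ^ (-((n:ℝ)+1)/2)))
          ((1-c^2)^((n:ℝ)/2) *
            (((n:ℝ)+1) * x^n * ((1 - x*c) * (1+x^2-2*x*c) ^ (-((n:ℝ)+3)/2)))) x := by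
    apply Filter.Eventually.of_forall
    intro c hc x hx
    rw [hΙ] at hc
    have hx1 : 1 < x := by have := (hball x hx).1; linarith
    exact deriv_ptw n hx1 hc.2
  have H := intervalIntegral.hasDerivAt_integral_of_dominated_loc_of_deriv_le
    (F := fun x c => (1-c^2)^((n:ℝ)/2) * (x^(n+1) * (1+x^2-2*x*c) ^ (-((n:ℝ)+1)/2)))
    (F' := fun x c => (1-c^2)^((n:ℝ)/2) *
      (((n:ℝ)+1) * x^n * ((1 - x*c) * (1+x^2-2*x*c) ^ (-((n:ℝ)+3)/2))))
    (bound := fun _ => ((n:ℝ)+1) * (t+ε)^n * ((1+(t+ε)) * (ε^2) ^ (-((n:ℝ)+3)/2)))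
    (Metric.ball_mem_nhds t hε0) hF_meas hF_int hF'_meas h_bound intervalIntegrable_const h_diff
  obtain ⟨-, hder⟩ := H
  have hzero : (∫ c in (-1:ℝ)..1, (1-c^2)^((n:ℝ)/2) *
      (((n:ℝ)+1) * t^n * ((1 - t*c) * (1+t^2-2*t*c) ^ (-((n:ℝ)+3)/2)))) = 0 := by
    have hrw : (fun c : ℝ => (1-c^2)^((n:ℝ)/2) *
        (((n:ℝ)+1) * t^n * ((1 - t*c) * (1+t^2-2*t*c) ^ (-((n:ℝ)+3)/2))))
        = (fun c : ℝ => (((n:ℝ)+1) * t^n) *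
          ((1-c^2)^((n:ℝ)/2) * ((1 - t*c) * (1+t^2-2*t*c) ^ (-((n:ℝ)+3)/2)))) := by
      funext c; ring
    rw [hrw, intervalIntegral.integral_const_mul, J_zero n ht, mul_zero]
  rwa [hzero] at hder





private lemma F_const (n : ℕ) {s t : ℝ} (hs : 1 < s) (hst : s ≤ t) :
    (∫ c in (-1:ℝ)..1, (1-c^2)^((n:ℝ)/2) * (s^(n+1) * (1+s^2-2*s*c) ^ (-((n:ℝ)+1)/2)))
    = ∫ c in (-1:ℝ)..1, (1-c^2)^((n:ℝ)/2) * (t^(n+1) * (1+t^2-2*t*c) ^ (-((n:ℝ)+1)/2)) := by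
  rcases eq_or_lt_of_le hst with rfl | hlt
  · rfl
  set F : ℝ → ℝ := fun x => ∫ c in (-1:ℝ)..1,
    (1-c^2)^((n:ℝ)/2) * (x^(n+1) * (1+x^2-2*x*c) ^ (-((n:ℝ)+1)/2)) with hF
  have hcont : ContinuousOn F (Set.Icc s t) := fun x hx =>
    (F_hasDeriv n (lt_of_lt_of_le hs hx.1)).continuousAt.continuousWithinAt
  have hderiv : ∀ x ∈ Set.Ioo s t, HasDerivAt F ((fun _ => (0:ℝ)) x) x := fun x hx =>
    F_hasDeriv n (lt_trans hs hx.1)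
  obtain ⟨c, -, hc⟩ := exists_hasDerivAt_eq_slope F (fun _ => (0:ℝ)) hlt hcont hderiv
  have h2 : F t - F s = 0 := by
    rcases div_eq_zero_iff.mp hc.symm with h | h
    · exact h
    · exfalso; exact (sub_ne_zero.mpr (ne_of_gt hlt)) h
  linarith [h2]

private lemma F_tendsto (n : ℕ) :
    Filter.Tendsto (fun t : ℝ => ∫ c in (-1:ℝ)..1,
        (1-c^2)^((n:ℝ)/2) * (t^(n+1) * (1+t^2-2*t*c) ^ (-((n:ℝ)+1)/2)))
      Filter.atTop (nhds (∫ c in (-1:ℝ)..1, (1-c^2)^((n:ℝ)/2))) := by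
  have hΙ : Set.uIoc (-1:ℝ) 1 = Set.Ioc (-1:ℝ) 1 := Set.uIoc_of_le (by norm_num)
  have he1cont : Continuous (fun c : ℝ => (1-c^2)^((n:ℝ)/2)) :=
    (continuous_const.sub (continuous_pow 2)).rpow_const (fun c => Or.inr (by positivity))
  apply intervalIntegral.tendsto_integral_filter_of_dominated_convergence
    (bound := fun _ => (4:ℝ) ^ (((n:ℝ)+1)/2))
  · filter_upwards [Filter.eventually_gt_atTop (1:ℝ)] with t ht
    apply ContinuousOn.aestronglyMeasurable _ measurableSet_uIoc
    rw [hΙ]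
    apply ContinuousOn.mono _ Set.Ioc_subset_Icc_self
    exact he1cont.continuousOn.mul (continuousOn_const.mul
      (ContinuousOn.rpow_const (by fun_prop)
        (fun c hc => Or.inl (ne_of_gt (d_pos ht hc.2)))))
  · filter_upwards [Filter.eventually_ge_atTop (2:ℝ)] with t ht
    apply Filter.Eventually.of_forall
    intro c hc
    rw [hΙ] at hc
    have ht1 : 1 < t := by linarith
    have hw : 0 < 1+t^2-2*t*c := d_pos ht1 hc.2
    have hcsq : (0:ℝ) ≤ 1-c^2 := by nlinarith [hc.1.le, hc.2]
    have he1 : 0 ≤ (1-c^2)^((n:ℝ)/2) := Real.rpow_nonneg hcsq _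
    have he1' : (1-c^2)^((n:ℝ)/2) ≤ 1 :=
      Real.rpow_le_one hcsq (by nlinarith [hc.1.le, hc.2]) (by positivity)
    have hkey : t^(n+1) * (1+t^2-2*t*c) ^ (-((n:ℝ)+1)/2)
        = (t^2/(1+t^2-2*t*c)) ^ (((n:ℝ)+1)/2) := by
      set w : ℝ := 1+t^2-2*t*c with hwdef
      rw [show (-((n:ℝ)+1)/2) = -(((n:ℝ)+1)/2) by ring, Real.rpow_neg hw.le,
        ← div_eq_mul_inv, Real.div_rpow (by positivity : (0:ℝ) ≤ t^2) hw.le]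
      congr 1
      rw [show (t:ℝ)^2 = t ^ ((2:ℕ):ℝ) from (Real.rpow_natCast t 2).symm,
        ← Real.rpow_mul (by linarith : (0:ℝ) ≤ t),
        show ((2:ℕ):ℝ) * (((n:ℝ)+1)/2) = ((n+1:ℕ):ℝ) by push_cast; ring,
        Real.rpow_natCast]
    have hratio : t^2/(1+t^2-2*t*c) ≤ 4 := by
      rw [div_le_iff₀ hw]
      nlinarith [hc.2, ht]
    rw [Real.norm_eq_abs, abs_mul, abs_of_nonneg he1, hkey,
      abs_of_nonneg (Real.rpow_nonneg (by positivity) _)]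
    calc (1-c^2)^((n:ℝ)/2) * (t^2/(1+t^2-2*t*c)) ^ (((n:ℝ)+1)/2)
        ≤ 1 * (4:ℝ) ^ (((n:ℝ)+1)/2) := by
          apply mul_le_mul he1' _ (Real.rpow_nonneg (by positivity) _) zero_le_one
          exact Real.rpow_le_rpow (by positivity) hratio (by positivity)
      _ = (4:ℝ) ^ (((n:ℝ)+1)/2) := one_mul _
  · exact intervalIntegrable_const
  · apply Filter.Eventually.of_forall
    intro c hc
    rw [hΙ] at hc
    have linv : Filter.Tendsto (fun t : ℝ => t⁻¹) Filter.atTop (nhds 0) :=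
      tendsto_inv_atTop_zero
    have l1 : Filter.Tendsto (fun t : ℝ => 1/t^2 + 1 - 2*c*t⁻¹)
        Filter.atTop (nhds 1) := by
      have h2 : Filter.Tendsto (fun t : ℝ => 1/t^2) Filter.atTop (nhds 0) := by
        have := linv.mul linv
        rw [mul_zero] at this
        apply this.congr
        intro t
        rw [one_div, sq, mul_inv]
      have h3 : Filter.Tendsto (fun t : ℝ => 2*c*t⁻¹) Filter.atTop (nhds 0) := by
        have := linv.const_mul (2*c)
        rwa [mul_zero] at this
      have := (h2.add (tendsto_const_nhds (x := (1:ℝ)))).sub h3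
      rwa [zero_add, sub_zero] at this
    have hlim1 : Filter.Tendsto (fun t : ℝ => (1+t^2-2*t*c)/t^2)
        Filter.atTop (nhds 1) := by
      apply Filter.Tendsto.congr' _ l1
      filter_upwards [Filter.eventually_gt_atTop (0:ℝ)] with t ht
      field_simp
    have hlim2 : Filter.Tendsto (fun t : ℝ => t^2/(1+t^2-2*t*c))
        Filter.atTop (nhds 1) := by
      have := hlim1.inv₀ one_ne_zero
      rw [inv_one] at this
      apply this.congr
      intro t
      rw [inv_div]
    have hlim3 : Filter.Tendsto (fun t : ℝ => (t^2/(1+t^2-2*t*c)) ^ (((n:ℝ)+1)/2))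
        Filter.atTop (nhds 1) := by
      have hco := (Real.continuousAt_rpow_const 1 (((n:ℝ)+1)/2) (Or.inl one_ne_zero)).tendsto
      have := hco.comp hlim2
      rwa [Real.one_rpow] at this
    have hfin := hlim3.const_mul ((1-c^2)^((n:ℝ)/2))
    rw [mul_one] at hfin
    apply Filter.Tendsto.congr' _ hfin
    filter_upwards [Filter.eventually_gt_atTop (1:ℝ)] with t ht1
    have hw : 0 < 1+t^2-2*t*c := d_pos ht1 hc.2
    have hkey : t^(n+1) * (1+t^2-2*t*c) ^ (-((n:ℝ)+1)/2)
        = (t^2/(1+t^2-2*t*c)) ^ (((n:ℝ)+1)/2) := by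
      set w : ℝ := 1+t^2-2*t*c with hwdef
      rw [show (-((n:ℝ)+1)/2) = -(((n:ℝ)+1)/2) by ring, Real.rpow_neg hw.le,
        ← div_eq_mul_inv, Real.div_rpow (by positivity : (0:ℝ) ≤ t^2) hw.le]
      congr 1
      rw [show (t:ℝ)^2 = t ^ ((2:ℕ):ℝ) from (Real.rpow_natCast t 2).symm,
        ← Real.rpow_mul (by linarith : (0:ℝ) ≤ t),
        show ((2:ℕ):ℝ) * (((n:ℝ)+1)/2) = ((n+1:ℕ):ℝ) by push_cast; ring,
        Real.rpow_natCast]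
    rw [hkey]



private lemma sphere_ratio (k : ℕ) :
    sphereArea (k+2) / sphereArea (k+1)
      = Real.sqrt π * Real.Gamma (((k:ℝ)+1)/2) / Real.Gamma (((k:ℝ)+2)/2) := by
  have hπ : (0:ℝ) < π := Real.pi_pos
  have ha : 0 < Real.Gamma (((k:ℝ)+2)/2) := Real.Gamma_pos_of_pos (by positivity)
  have hb : 0 < Real.Gamma (((k:ℝ)+1)/2) := Real.Gamma_pos_of_pos (by positivity)
  have hπb : (0:ℝ) < π ^ (((k:ℝ)+1)/2) := Real.rpow_pos_of_pos hπ _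
  have key : (π:ℝ) ^ (((k:ℝ)+2)/2) = π ^ (((k:ℝ)+1)/2) * Real.sqrt π := by
    rw [Real.sqrt_eq_rpow, ← Real.rpow_add hπ]
    congr 1
    ring
  unfold sphereArea
  push_cast
  rw [key]
  field_simp
theorem stmt1 (k : ℕ) (r : ℝ) (hr : 1 < r) :
    ∫ θ in (0:ℝ)..Real.pi,
        (Real.sin θ) ^ k / (1 + r ^ 2 - 2 * r * Real.cos θ) ^ ((k : ℝ) / 2)
      = sphereArea (k + 2) / sphereArea (k + 1) * r ^ (-(k : ℝ)) := by
  have hr0 : (0:ℝ) < r := lt_trans one_pos hr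
  cases k with
  | zero =>
      simp only [Nat.cast_zero, pow_zero, zero_div, Real.rpow_zero, neg_zero, div_one]
      rw [intervalIntegral.integral_const]
      have hrat := sphere_ratio 0
      norm_num at hrat ⊢
      rw [hrat, Real.Gamma_one_half_eq]
      exact (Real.mul_self_sqrt Real.pi_pos.le).symm
  | succ n =>
      set g : ℝ → ℝ := fun c => (1+r^2-2*r*c) ^ (-((n:ℝ)+1)/2) with hgdef
      have hg : ContinuousOn g (Set.Icc (-1:ℝ) 1) :=
        ContinuousOn.rpow_const (by fun_prop) (fun c hc => Or.inl (ne_of_gt (d_pos hr hc.2)))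
      have h1 : Set.EqOn
          (fun θ => Real.sin θ ^ (n+1) / (1 + r^2 - 2*r*Real.cos θ) ^ (((n+1:ℕ):ℝ)/2))
          (fun θ => Real.sin θ ^ (n+1) * g (Real.cos θ)) (Set.uIcc (0:ℝ) π) := by
        intro θ _
        have hw : 0 < 1 + r^2 - 2*r*Real.cos θ := d_pos hr (Real.cos_le_one θ)
        simp only [hgdef]
        rw [div_eq_mul_inv, ← Real.rpow_neg hw.le]
        congr 2
        push_cast
        ring
      have step1 : (∫ θ in (0:ℝ)..π,
            Real.sin θ ^ (n+1) / (1+r^2-2*r*Real.cos θ) ^ (((n+1:ℕ):ℝ)/2))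
          = ∫ c in (-1:ℝ)..1, (1-c^2)^((n:ℝ)/2) * g c := by
        rw [intervalIntegral.integral_congr h1, sub_cos n g hg]
      set W : ℝ := ∫ c in (-1:ℝ)..1, (1-c^2)^((n:ℝ)/2) with hWdef
      set I : ℝ := ∫ c in (-1:ℝ)..1, (1-c^2)^((n:ℝ)/2) * g c with hIdef
      have hFr : (∫ c in (-1:ℝ)..1, (1-c^2)^((n:ℝ)/2)
            * (r^(n+1) * (1+r^2-2*r*c) ^ (-((n:ℝ)+1)/2)))
          = r^(n+1) * I := by
        rw [hIdef, ← intervalIntegral.integral_const_mul]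
        apply intervalIntegral.integral_congr
        intro c _
        simp only [hgdef]
        ring
      have hev : (fun x : ℝ => ∫ c in (-1:ℝ)..1,
            (1-c^2)^((n:ℝ)/2) * (x^(n+1) * (1+x^2-2*x*c) ^ (-((n:ℝ)+1)/2)))
          =ᶠ[Filter.atTop] (fun _ => r^(n+1) * I) := by
        filter_upwards [Filter.eventually_ge_atTop (max r 2)] with t ht
        have h := F_const n hr (le_trans (le_max_left r 2) ht)
        rw [← h, hFr]
      have hWF : W = r^(n+1) * I :=
        tendsto_nhds_unique ((F_tendsto n).congr' hev) tendsto_const_nhds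
      have hWallis : W = Real.sqrt π * Real.Gamma ((((n+1:ℕ):ℝ)+1)/2)
          / Real.Gamma ((((n+1:ℕ):ℝ)+2)/2) := by
        have hsc := sub_cos n (fun _ => (1:ℝ)) continuousOn_const
        simp only [mul_one] at hsc
        rw [hWdef, ← hsc, wallis (n+1)]
      rw [step1, sphere_ratio (n+1)]
      have hrk : (r:ℝ)^(n+1) ≠ 0 := by positivity
      have hI : I = W / r^(n+1) := by
        rw [hWF]; field_simp
      rw [hI, hWallis,
        show r ^ (-((n+1:ℕ):ℝ)) = ((r:ℝ)^(n+1))⁻¹ by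
          rw [Real.rpow_neg hr0.le, Real.rpow_natCast]]
      field_simp
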